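/- The set of sequences f : ℕ → ℕ containing infinitely many zeroes (i.e., {f : ∀ m, ∃ n > m, f(n) = 0}) is not guessable. -/

import Mathlib

open Filter Set
open scoped Classical

/-- The initial segment `(f 0, ..., f n)` of an infinite sequence. -/
def seg (f : ℕ → ℕ) (n : ℕ) : List ℕ := List.ofFn fun i : Fin (n + 1) => f i

/-- `G` guesses `S`: for every `f` eventually `G (f 0, ..., f n)` is 1 if `f ∈ S`, else 0. -/
def Guesses (G : List ℕ → Fin 2) (S : Set (ℕ → ℕ)) : Prop :=
  ∀ f : ℕ → ℕ, ∃ m, ∀ n, n > m → G (seg f n) = if f ∈ S then 1 else 0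

/-- `S` is guessable if some `G` guesses it. -/
def Guessable (S : Set (ℕ → ℕ)) : Prop := ∃ G, Guesses G S

/-- An infinite sequence extends a finite sequence. -/
def ExtendsSeq (h : ℕ → ℕ) (g : List ℕ) : Prop :=
  ∀ i, (hi : i < g.length) → h i = g.get ⟨i, hi⟩

/-- `S` is overguessable. -/
def Overguessable (S : Set (ℕ → ℕ)) : Prop :=
  ∃ μ : List ℕ → ℕ∞,
    (∀ f ∈ S, ∃ B : ℕ, ∀ᶠ n in atTop, μ (seg f n) ≤ (B : ℕ∞)) ∧
    (∀ f ∉ S, ∀ B : ℕ, ∀ᶠ n in atTop, (B : ℕ∞) < μ (seg f n))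

/-- Diagonal list construction against a guesser `G`. -/
def diagL (G : List ℕ → Fin 2) : ℕ → List ℕ
  | 0 => [0]
  | n + 1 => diagL G n ++ [if G (diagL G n) = 1 then 1 else 0]

/-- Diagonal sequence against `G`. -/
def diagf (G : List ℕ → Fin 2) (n : ℕ) : ℕ := (diagL G n).getLastD 0

lemma diagL_length (G : List ℕ → Fin 2) (n : ℕ) : (diagL G n).length = n + 1 := by
  induction n with
  | zero => rfl
  | succ n ih => simp [diagL, ih]

lemma diagL_getElem (G : List ℕ → Fin 2) :
    ∀ n i (h : i ≤ n), (diagL G n)[i]'(by rw [diagL_length]; omega) = diagf G i := by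
  intro n
  induction n with
  | zero =>
    intro i h
    interval_cases i
    rfl
  | succ n ih =>
    intro i h
    rcases Nat.lt_or_ge i (n + 1) with hi | hi
    · have hi' : i < (diagL G n).length := by rw [diagL_length]; omega
      have e : (diagL G (n+1))[i]'(by rw [diagL_length]; omega)
          = (diagL G n ++ [if G (diagL G n) = 1 then 1 else 0])[i]'(by
              simp [diagL_length]; omega) := by
        congr 1
      rw [e, List.getElem_append_left hi']
      exact ih i (by omega)
    · have hie : i = n + 1 := by omega
      subst hie
      have h1 : diagL G (n+1) = diagL G n ++ [if G (diagL G n) = 1 then 1 else 0] := rfl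
      have h2 : diagf G (n+1) = if G (diagL G n) = 1 then 1 else 0 := by
        simp [diagf, h1, List.getLastD_concat]
      rw [h2]
      have := List.getElem_concat_length (l := diagL G n)
        (a := if G (diagL G n) = 1 then 1 else 0) (i := n+1) (by rw [diagL_length]) (by simp [diagL_length])
      have e : (diagL G (n+1))[n+1]'(by rw [diagL_length]; omega)
          = (diagL G n ++ [if G (diagL G n) = 1 then 1 else 0])[n+1]'(by
              simp [diagL_length]) := by
        congr 1
      rw [e]
      exact this

lemma seg_diagf (G : List ℕ → Fin 2) (n : ℕ) : seg (diagf G) n = diagL G n := by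
  apply List.ext_getElem
  · simp [seg, diagL_length]
  · intro i h1 h2
    have hi : i ≤ n := by
      have := diagL_length G n; omega
    rw [diagL_getElem G n i hi]
    simp only [seg, List.getElem_ofFn]

lemma diagf_succ (G : List ℕ → Fin 2) (n : ℕ) :
    diagf G (n + 1) = if G (seg (diagf G) n) = 1 then 1 else 0 := by
  rw [seg_diagf]
  simp [diagf, diagL, List.getLastD_concat]

theorem stmt3 : ¬ Guessable {f : ℕ → ℕ | ∀ m, ∃ n > m, f n = 0} := by
  rintro ⟨G, hG⟩
  set S : Set (ℕ → ℕ) := {f : ℕ → ℕ | ∀ m, ∃ n > m, f n = 0} with hS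
  set f := diagf G with hf
  obtain ⟨m, hm⟩ := hG f
  by_cases hfS : f ∈ S
  · -- eventually G says 1, so f is eventually 1, contradicting infinitely many zeros
    obtain ⟨n, hn, hn0⟩ := hfS (m + 1)
    have hn1 : f n = 1 := by
      obtain ⟨k, rfl⟩ : ∃ k, n = k + 1 := ⟨n - 1, by omega⟩
      rw [hf, diagf_succ, ← hf]
      have := hm k (by omega)
      rw [if_pos hfS] at this
      rw [this]
      simp
    omega
  · -- eventually G says 0, so f is eventually 0, so f ∈ S
    apply hfS
    intro k
    refine ⟨max k m + 2, by omega, ?_⟩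
    rw [hf, diagf_succ, ← hf]
    have := hm (max k m + 1) (by omega)
    rw [if_neg hfS] at this
    rw [this]
    simp
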